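/- For any real coefficients a_{i,j} (1 ≤ i,j ≤ n), ‖Σ_{i,j=1}^n a_{i,j} r_i(t) r_j(t)‖_{L^∞([0,1])} ≤ ‖Σ_{i,j=1}^n a_{i,j} r_i(s) r_j(t)‖_{L^∞([0,1]²)}. -/

import Mathlib

open MeasureTheory Real Set

/-- Rademacher function `r_k(t) = sign (sin (2^(k-1) π t))`. -/
noncomputable def rad (k : ℕ) (t : ℝ) : ℝ :=
  Real.sign (Real.sin (2 ^ (k - 1) * Real.pi * t))

/-- Lebesgue measure on the unit square `[0,1]²`. -/
noncomputable def μsq : Measure (ℝ × ℝ) :=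
  (volume.restrict (Set.Icc (0:ℝ) 1)).prod (volume.restrict (Set.Icc (0:ℝ) 1))

lemma rad_eq_neg_one_pow {k : ℕ} (hk : 1 ≤ k) {m : ℕ} {t : ℝ}
    (h1 : (m : ℝ) / 2 ^ (k - 1) < t) (h2 : t < ((m : ℝ) + 1) / 2 ^ (k - 1)) :
    rad k t = (-1 : ℝ) ^ m := by
  have hp : (0:ℝ) < 2 ^ (k-1) := by positivity
  set x : ℝ := 2 ^ (k-1) * t - m with hx
  have hx0 : 0 < x := by
    have := (div_lt_iff₀ hp).mp h1
    nlinarith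
  have hx1 : x < 1 := by
    have := (lt_div_iff₀ hp).mp h2
    nlinarith
  have hc : Real.cos ((m : ℝ) * Real.pi) = (-1)^m := by
    have := Real.cos_nat_mul_pi_sub 0 m
    simpa using this
  have hsin : Real.sin (2 ^ (k-1) * Real.pi * t)
      = (-1:ℝ)^m * Real.sin (Real.pi * x) := by
    have harg : 2 ^ (k-1) * Real.pi * t = (m : ℝ) * Real.pi + Real.pi * x := by
      rw [hx]; ring
    rw [harg, Real.sin_add, Real.sin_nat_mul_pi, hc]; ring
  have hspos : 0 < Real.sin (Real.pi * x) :=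
    Real.sin_pos_of_pos_of_lt_pi (by positivity)
      (by nlinarith [Real.pi_pos])
  rw [rad, hsin]
  rcases Nat.even_or_odd m with he | ho
  · rw [he.neg_one_pow, one_mul]
    exact Real.sign_of_pos hspos
  · rw [ho.neg_one_pow]
    have : (-1 : ℝ) * Real.sin (Real.pi * x) < 0 := by nlinarith
    exact Real.sign_of_neg this

lemma rad_eq_sgn (n k m : ℕ) (hk1 : 1 ≤ k) (hkn : k ≤ n) {t : ℝ}
    (h1 : (m : ℝ) / 2 ^ n < t) (h2 : t < ((m : ℝ) + 1) / 2 ^ n) :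
    rad k t = (-1 : ℝ) ^ (m / 2 ^ (n - (k - 1))) := by
  set d := n - (k - 1) with hd
  set m' := m / 2 ^ d with hm'
  have hkd : (k - 1) + d = n := by omega
  have key : (2:ℝ) ^ (k-1) * 2 ^ d = 2 ^ n := by rw [← pow_add, hkd]
  have hpn : (0:ℝ) < 2 ^ n := by positivity
  have hpk : (0:ℝ) < 2 ^ (k-1) := by positivity
  have hpd : (0:ℝ) < 2 ^ d := by positivity
  apply rad_eq_neg_one_pow hk1
  · have hnat : (m' * 2 ^ d : ℕ) ≤ m := Nat.div_mul_le_self m (2 ^ d)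
    have hle : ((m' : ℝ) * 2 ^ d) / 2 ^ n ≤ (m : ℝ) / 2 ^ n := by
      gcongr
      exact_mod_cast hnat
    calc (m' : ℝ) / 2 ^ (k-1) = ((m' : ℝ) * 2 ^ d) / 2 ^ n := by
          rw [← key]; field_simp
      _ ≤ (m : ℝ) / 2 ^ n := hle
      _ < t := h1
  · have hnat : m + 1 ≤ (m' + 1) * 2 ^ d := by
      have h1' := Nat.div_add_mod m (2 ^ d)
      have h2' : m % 2 ^ d < 2 ^ d := Nat.mod_lt _ (by positivity)
      calc m + 1 = 2 ^ d * (m / 2 ^ d) + (m % 2 ^ d + 1) := by omega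
        _ ≤ 2 ^ d * (m / 2 ^ d) + 2 ^ d := Nat.add_le_add_left h2' _
        _ = (m' + 1) * 2 ^ d := by rw [hm']; ring
    have hle : ((m : ℝ) + 1) / 2 ^ n ≤ (((m' : ℝ) + 1) * 2 ^ d) / 2 ^ n := by
      gcongr
      have : ((m + 1 : ℕ) : ℝ) ≤ (((m' + 1) * 2 ^ d : ℕ) : ℝ) := by exact_mod_cast hnat
      push_cast at this
      linarith
    calc t < ((m : ℝ) + 1) / 2 ^ n := h2
      _ ≤ (((m' : ℝ) + 1) * 2 ^ d) / 2 ^ n := hle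
      _ = ((m' : ℝ) + 1) / 2 ^ (k-1) := by rw [← key]; field_simp

lemma enorm_le_eLpNormEssSup' {α : Type*} [MeasurableSpace α] {μ : Measure α}
    (g : α → ℝ) (S : Set α) (hS : μ S ≠ 0) (C : ℝ) (hg : ∀ x ∈ S, g x = C) :
    (‖C‖₊ : ENNReal) ≤ eLpNormEssSup g μ := by
  by_contra h
  push_neg at h
  have hae : ∀ᵐ x ∂μ, (‖g x‖₊ : ENNReal) ≤ eLpNormEssSup g μ := ae_le_eLpNormEssSup
  have h0 : μ {x | ¬ ((‖g x‖₊ : ENNReal) ≤ eLpNormEssSup g μ)} = 0 := by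
    rw [← ae_iff] at *
    exact hae
  have hsub : S ⊆ {x | ¬ ((‖g x‖₊ : ENNReal) ≤ eLpNormEssSup g μ)} := by
    intro x hx
    simp only [Set.mem_setOf_eq, not_le, hg x hx]
    exact h
  exact hS (le_antisymm ((measure_mono hsub).trans h0.le) zero_le)

/-- The sup-norm of the undecoupled chaos is dominated by that of the decoupled chaos:
`‖Σ a_{i,j} r_i(t) r_j(t)‖_{L^∞([0,1])} ≤ ‖Σ a_{i,j} r_i(s) r_j(t)‖_{L^∞([0,1]²)}`. -/
theorem undecoupled_sup_norm_le_decoupled (n : ℕ) (a : ℕ → ℕ → ℝ) :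
    eLpNorm (fun t : ℝ =>
        ∑ i ∈ Finset.Icc 1 n, ∑ j ∈ Finset.Icc 1 n, a i j * rad i t * rad j t) ⊤
      (volume.restrict (Set.Icc (0:ℝ) 1))
    ≤ eLpNorm (fun p : ℝ × ℝ =>
        ∑ i ∈ Finset.Icc 1 n, ∑ j ∈ Finset.Icc 1 n, a i j * rad i p.1 * rad j p.2) ⊤ μsq := by
  set G := fun p : ℝ × ℝ =>
      ∑ i ∈ Finset.Icc 1 n, ∑ j ∈ Finset.Icc 1 n, a i j * rad i p.1 * rad j p.2 with hG
  set c : ℕ → ℝ := fun m => ∑ i ∈ Finset.Icc 1 n, ∑ j ∈ Finset.Icc 1 n,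
      a i j * (-1:ℝ)^(m / 2^(n-(i-1))) * (-1:ℝ)^(m / 2^(n-(j-1))) with hc
  rw [eLpNorm_exponent_top, eLpNorm_exponent_top]
  show essSup _ _ ≤ _
  refine essSup_le_of_ae_le _ ?_
  have hmem : ∀ᵐ t ∂(volume.restrict (Set.Icc (0:ℝ) 1)), t ∈ Set.Icc (0:ℝ) 1 :=
    ae_restrict_mem measurableSet_Icc
  have hDcnt : ((fun j : ℕ => (j:ℝ)/2^n) '' (Set.Iic (2^n))).Countable :=
    (Set.to_countable _).image _
  have hD : ∀ᵐ t ∂(volume.restrict (Set.Icc (0:ℝ) 1)),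
      t ∉ (fun j : ℕ => (j:ℝ)/2^n) '' (Set.Iic (2^n)) := by
    refine ae_restrict_of_ae ?_
    rw [ae_iff]
    simpa only [not_not, Set.setOf_mem_eq] using hDcnt.measure_zero volume
  filter_upwards [hmem, hD] with t ht hDt
  -- find the dyadic interval containing t
  have h2n : (0:ℝ) < 2 ^ n := by positivity
  have ht0 : 0 < t := by
    rcases ht.1.lt_or_eq with h | h
    · exact h
    · exact absurd ⟨0, by simp, by simp [← h]⟩ hDt
  have ht1 : t < 1 := by
    rcases ht.2.lt_or_eq with h | h
    · exact h
    · refine absurd ⟨2^n, by simp, ?_⟩ hDt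
      simp [h, div_self (ne_of_gt h2n)]
  set m : ℕ := (⌊t * 2^n⌋).toNat with hm
  have hfl0 : (0:ℤ) ≤ ⌊t * 2^n⌋ := Int.floor_nonneg.mpr (by positivity)
  have hmr : (m : ℝ) = (⌊t * 2^n⌋ : ℝ) := by
    rw [hm]; exact_mod_cast Int.toNat_of_nonneg hfl0
  have hmle : (m : ℝ) ≤ t * 2^n := by rw [hmr]; exact Int.floor_le _
  have hlt : t * 2^n < (m : ℝ) + 1 := by rw [hmr]; exact Int.lt_floor_add_one _
  have hmn : m < 2^n := by
    have : (m:ℝ) < 2^n := lt_of_le_of_lt hmle (by nlinarith)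
    exact_mod_cast this
  have hne : (m : ℝ)/2^n ≠ t := by
    intro h
    exact hDt ⟨m, by simp [Set.mem_Iic]; omega, h⟩
  have h1 : (m : ℝ)/2^n < t :=
    lt_of_le_of_ne ((div_le_iff₀ h2n).mpr hmle) hne
  have h2 : t < ((m : ℝ) + 1)/2^n := (lt_div_iff₀ h2n).mpr hlt
  -- value of the sum on the interval
  have hFt : ∑ i ∈ Finset.Icc 1 n, ∑ j ∈ Finset.Icc 1 n, a i j * rad i t * rad j t
      = c m := by
    refine Finset.sum_congr rfl fun i hi => Finset.sum_congr rfl fun j hj => ?_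
    simp only [Finset.mem_Icc] at hi hj
    rw [rad_eq_sgn n i m hi.1 hi.2 h1 h2, rad_eq_sgn n j m hj.1 hj.2 h1 h2]
  rw [hFt]
  -- the decoupled function equals c m on a positive-measure square
  set I : Set ℝ := Set.Ioo ((m : ℝ)/2^n) (((m : ℝ) + 1)/2^n) with hI
  have hIsub : I ⊆ Set.Icc (0:ℝ) 1 := by
    intro x hx
    constructor
    · have : (0:ℝ) ≤ (m:ℝ)/2^n := by positivity
      linarith [hx.1]
    · have hub : ((m : ℝ) + 1)/2^n ≤ 1 := by
        rw [div_le_one h2n]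
        have : (m:ℝ) + 1 ≤ 2^n := by exact_mod_cast hmn
        exact this
      linarith [hx.2]
  have hIvol : volume.restrict (Set.Icc (0:ℝ) 1) I ≠ 0 := by
    rw [Measure.restrict_apply measurableSet_Ioo,
      Set.inter_eq_self_of_subset_left hIsub, Real.volume_Ioo]
    simp only [ne_eq, ENNReal.ofReal_eq_zero, not_le]
    have : (m : ℝ)/2^n < ((m : ℝ) + 1)/2^n := by
      gcongr
      linarith
    linarith [this]
  have hμS : μsq (I ×ˢ I) ≠ 0 := by
    rw [μsq, Measure.prod_prod]
    exact mul_ne_zero hIvol hIvol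
  have hGconst : ∀ p ∈ I ×ˢ I, G p = c m := by
    rintro ⟨s, u⟩ hp
    obtain ⟨hs, hu⟩ := hp
    refine Finset.sum_congr rfl fun i hi => Finset.sum_congr rfl fun j hj => ?_
    simp only [Finset.mem_Icc] at hi hj
    rw [rad_eq_sgn n i m hi.1 hi.2 hs.1 hs.2, rad_eq_sgn n j m hj.1 hj.2 hu.1 hu.2]
  exact enorm_le_eLpNormEssSup' G (I ×ˢ I) hμS (c m) hGconst
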